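/- Let $X$ be a regular (nonsingular) variety over an algebraically closed field of characteristic $p>0$, and let $\sigma_1, \sigma_2 \in H^0(X, \omega_X^{-1})$ be anticanonical sections such that: (i) both $\sigma_1^{p-1}$ and $\sigma_2^{p-1}$ are splitting sections of $X$; (ii) $\sigma_1$ and $\sigma_2$ have the same vanishing locus; (iii) every global nonvanishing regular function on $X$ is constant. Then $\sigma_1^{p-1} = \sigma_2^{p-1}$. -/

import Mathlib

/-- (Affine model, with the anticanonical sheaf trivialized so that anticanonical
sections are ring elements and `p⁻¹`-linear maps `ψ` play the role of the Cartier
operator.)  Let `R` be a domain of finite type over an algebraically closed field `k`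
of characteristic `p > 0` (a variety), and let `σ₁, σ₂ ∈ R` be such that
(i) `f ↦ ψ(σᵢ^{p-1} f)` is a Frobenius splitting for `i = 1, 2`;
(ii) `σ₁` and `σ₂` have the same vanishing locus;
(iii) every nonvanishing function (unit of `R`) is a constant from `k`.
Then `σ₁^{p-1} = σ₂^{p-1}`. -/
theorem stmt_17 {k R : Type*} [Field k] [IsAlgClosed k] (p : ℕ) [Fact p.Prime] [CharP k p]
    [CommRing R] [IsDomain R] [Algebra k R] [CharP R p]
    (hfin : Algebra.FiniteType k R)
    (ψ : R → R)
    (hψadd : ∀ a b : R, ψ (a + b) = ψ a + ψ b)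
    (hψsemi : ∀ a b : R, ψ (a ^ p * b) = a * ψ b)
    (σ₁ σ₂ : R)
    (hsplit₁ : ψ (σ₁ ^ (p - 1)) = 1)
    (hsplit₂ : ψ (σ₂ ^ (p - 1)) = 1)
    (hvan : ∀ P : Ideal R, P.IsMaximal → (σ₁ ∈ P ↔ σ₂ ∈ P))
    (hunits : ∀ u : Rˣ, ∃ c : k, (u : R) = algebraMap k R c) :
    σ₁ ^ (p - 1) = σ₂ ^ (p - 1) := by
  have hp : p.Prime := Fact.out
  have hp1 : 1 ≤ p := hp.one_lt.le
  have hpow : p - 1 + 1 = p := Nat.succ_pred_eq_of_pos hp.pos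
  have hψ0 : ψ 0 = 0 := by
    have := hψadd 0 0
    simp at this
    linear_combination (norm := abel) this
  -- one-step descent for a splitting section σ
  have hstep : ∀ σ : R, ψ (σ ^ (p - 1)) = 1 →
      ∀ g : R, g ^ p ∈ Ideal.span {σ} → g ∈ Ideal.span {σ} := by
    intro σ hσ g hg
    rw [Ideal.mem_span_singleton] at hg ⊢
    obtain ⟨r, hr⟩ := hg
    have : ψ (σ ^ (p-1) * g ^ p) = g := by
      rw [mul_comm, hψsemi, hσ, mul_one]
    rw [hr, ← mul_assoc, ← pow_succ, hpow, hψsemi] at this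
    exact ⟨ψ r, this.symm⟩
  -- radical descent
  have hrad : ∀ σ : R, ψ (σ ^ (p - 1)) = 1 →
      (Ideal.span {σ}).radical = Ideal.span {σ} := by
    intro σ hσ
    apply le_antisymm _ Ideal.le_radical
    intro f hf
    obtain ⟨n, hn⟩ := hf
    have key : ∀ m : ℕ, f ^ (p ^ m) ∈ Ideal.span {σ} → f ∈ Ideal.span {σ} := by
      intro m
      induction m with
      | zero => intro h; simpa using h
      | succ m ih =>
        intro h
        apply ih
        apply hstep σ hσ
        rwa [← pow_mul, ← pow_succ]
    apply key n
    have hle : n ≤ p ^ n := Nat.le_of_lt (Nat.lt_pow_self hp.one_lt : n < p ^ n)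
    rw [show p ^ n = n + (p ^ n - n) by omega, pow_add]
    exact Ideal.mul_mem_right _ _ hn
  -- Jacobson
  have : IsJacobsonRing R := isJacobsonRing_of_finiteType (A := k)
  have hjac : ∀ σ : R, (Ideal.span {σ}).jacobson =
      sInf {P : Ideal R | σ ∈ P ∧ P.IsMaximal} := by
    intro σ
    unfold Ideal.jacobson
    congr 1
    ext P
    simp [Ideal.span_le]
  have hspan : Ideal.span {σ₁} = Ideal.span ({σ₂} : Set R) := by
    rw [← hrad σ₁ hsplit₁, ← hrad σ₂ hsplit₂, Ideal.radical_eq_jacobson,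
      Ideal.radical_eq_jacobson, hjac, hjac]
    congr 1
    ext P
    exact and_congr_left fun hP => hvan P hP
  have hassoc : Associated σ₁ σ₂ := (Ideal.span_singleton_eq_span_singleton).1 hspan
  obtain ⟨u, hu⟩ := hassoc
  obtain ⟨c, hc⟩ := hunits u
  obtain ⟨d, hd⟩ : ∃ d : k, d ^ p = c := ⟨_, IsAlgClosed.exists_pow_nat_eq c hp.pos |>.choose_spec⟩
  set e : R := algebraMap k R d with he
  have h2 : σ₂ ^ (p - 1) = (e ^ (p - 1)) ^ p * σ₁ ^ (p - 1) := by
    rw [← hu, mul_pow, hc, ← hd, map_pow]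
    ring
  have h3 : e ^ (p - 1) = 1 := by
    have := hψsemi (e ^ (p - 1)) (σ₁ ^ (p - 1))
    rw [← h2, hsplit₂, hsplit₁, mul_one] at this
    exact this.symm
  rw [h2, h3, one_pow, one_mul]
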